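/- Let X be finite, y ∉ X, Y = X ∪ {y}. If r is an extremal ray of the cone of p-standardized submodular functions on X (r is not a positive conic combination of rays of the cone that are not multiples of r), then its extension r*, defined by r*(A) = r*(A∪{y}) = r(A) for A ⊆ X, generates an extremal ray of the cone of p-standardized submodular functions on Y. Key step: any p-standardized submodular function s on Y with s({y}) = 0 satisfies s(A∪{y}) = s(A) for all A ⊆ X, hence is of the form t* for a p-standardized submodular function t on X. -/
import Mathlib


open Finset

/-- A p-standardized submodular function on the finite base set `β`:
submodular, pointed, and tight at the top. -/
def PStdSubmodular {β : Type*} [Fintype β] [DecidableEq β]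
    (f : Finset β → ℝ) : Prop :=
  (∀ A B : Finset β, f (A ∩ B) + f (A ∪ B) ≤ f A + f B) ∧ f ∅ = 0 ∧
    ∀ i : β, f (Finset.univ.erase i) = f Finset.univ

variable {α : Type*} [Fintype α] [DecidableEq α]

/-- Extension of `f` to the base set `Y = X ∪ {y}` (here `y = none`):
`f*(A) = f*(A∪{y}) = f(A)` for `A ⊆ X`. -/
def starExt (f : Finset α → ℝ) : Finset (Option α) → ℝ := fun B =>
  f B.eraseNone

section AuxStar

variable {β : Type*} [Fintype β] [DecidableEq β]

lemma pstd_erase_le (f : Finset β → ℝ) (hf : PStdSubmodular f) (i : β) (A : Finset β) :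
    f (A.erase i) ≤ f A := by
  by_cases hi : i ∈ A
  · have h := hf.1 A (Finset.univ.erase i)
    have h1 : A ∩ Finset.univ.erase i = A.erase i := by
      ext x; simp [Finset.mem_erase, and_comm]
    have h2 : A ∪ Finset.univ.erase i = Finset.univ := by
      ext x; by_cases hx : x = i <;> simp [hx, hi]
    rw [h1, h2, hf.2.2 i] at h
    linarith
  · rw [Finset.erase_eq_of_notMem hi]

lemma pstd_eq_erase (f : Finset β → ℝ) (hf : PStdSubmodular f) (i : β) (hi : f {i} = 0)
    (A : Finset β) : f (A.erase i) = f A := by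
  by_cases hA : i ∈ A
  · have h := hf.1 (A.erase i) {i}
    have h1 : A.erase i ∩ {i} = ∅ := by ext x; simp (config := { contextual := true })
    have h2 : A.erase i ∪ {i} = A := by
      ext x; by_cases hx : x = i <;> simp [hx, hA, Finset.mem_erase]
    rw [h1, h2, hf.2.1, hi] at h
    have := pstd_erase_le f hf i A
    linarith
  · rw [Finset.erase_eq_of_notMem hA]

end AuxStar

section AuxStar2

variable {α : Type*} [Fintype α] [DecidableEq α]

lemma eraseNone_image_some' (A : Finset α) : (A.image some).eraseNone = A := by
  ext x; simp

lemma image_some_eraseNone' (B : Finset (Option α)) :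
    (B.eraseNone.image some) = B.erase none := by
  ext x; cases x <;> simp

lemma starExt_at_image (f : Finset α → ℝ) (A : Finset α) :
    starExt f (A.image some) = f A := by
  rw [starExt, eraseNone_image_some']

end AuxStar2

/-- If `r` generates an extremal ray of the cone of p-standardized submodular
functions on `X`, then `r*` generates an extremal ray of the corresponding cone
on `Y = X ∪ {y}`.  The key step: any `s` in the cone on `Y` with `s({y}) = 0`
is of the form `t*` for some `t` in the cone on `X`. -/
theorem starExt_extremal (r : Finset α → ℝ) (hr : PStdSubmodular r) (hne : r ≠ 0)
    (hext : ∀ u v : Finset α → ℝ, PStdSubmodular u → PStdSubmodular v →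
      r = u + v → (∃ c ≥ (0:ℝ), u = c • r) ∧ (∃ c' ≥ (0:ℝ), v = c' • r)) :
    (∀ s : Finset (Option α) → ℝ, PStdSubmodular s → s {none} = 0 →
      ∃ t : Finset α → ℝ, PStdSubmodular t ∧ s = starExt t) ∧
    starExt r ≠ 0 ∧
    ∀ u v : Finset (Option α) → ℝ, PStdSubmodular u → PStdSubmodular v →
      starExt r = u + v →
      (∃ c ≥ (0:ℝ), u = c • starExt r) ∧ (∃ c' ≥ (0:ℝ), v = c' • starExt r) := by
  constructor
  · -- Key step
    intro s hs hs0
    refine ⟨fun A => s (A.image some), ⟨?_, ?_, ?_⟩, ?_⟩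
    · intro A B
      have h := hs.1 (A.image some) (B.image some)
      rw [← Finset.image_inter _ _ (Option.some_injective α),
        ← Finset.image_union] at h
      exact h
    · simpa using hs.2.1
    · intro i
      have key := pstd_eq_erase s hs none hs0
      have h1 : ((Finset.univ : Finset (Option α)).erase (some i)).erase none
          = (Finset.univ.erase i).image some := by
        ext x; cases x <;> simp
      have h2 : (Finset.univ : Finset (Option α)).erase none
          = Finset.univ.image some := by
        ext x; cases x <;> simp
      calc s ((Finset.univ.erase i).image some)
          = s (((Finset.univ : Finset (Option α)).erase (some i)).erase none) := by
            rw [h1]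
        _ = s ((Finset.univ : Finset (Option α)).erase (some i)) := key _
        _ = s (Finset.univ : Finset (Option α)) := hs.2.2 (some i)
        _ = s ((Finset.univ : Finset (Option α)).erase none) := (key _).symm
        _ = s (Finset.univ.image some) := by rw [h2]
    · funext B
      show s B = s (B.eraseNone.image some)
      rw [image_some_eraseNone', pstd_eq_erase s hs none hs0]
  constructor
  · -- starExt r ≠ 0
    intro h
    apply hne
    funext A
    have := congrFun h (A.image some)
    rw [starExt_at_image] at this
    simpa using this
  · -- extremality
    intro u v hu hv huv
    -- values at {none}
    have hr0 : starExt r {none} = 0 := by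
      have : ({none} : Finset (Option α)).eraseNone = ∅ := by ext x; simp
      rw [starExt, this, hr.2.1]
    have hule : (0:ℝ) ≤ u {none} := by
      have := pstd_erase_le u hu none {none}
      simpa [hu.2.1] using this
    have hvle : (0:ℝ) ≤ v {none} := by
      have := pstd_erase_le v hv none {none}
      simpa [hv.2.1] using this
    have hsum : u {none} + v {none} = 0 := by
      have := congrFun huv {none}
      rw [hr0] at this
      exact this.symm
    have hu0 : u {none} = 0 := by linarith
    have hv0 : v {none} = 0 := by linarith
    -- u, v come from below
    have hrsum : r = (fun A => u (A.image some)) + (fun A => v (A.image some)) := by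
      funext A
      have := congrFun huv (A.image some)
      rw [starExt_at_image] at this
      exact this
    have htu : PStdSubmodular (fun A : Finset α => u (A.image some)) := by
      refine ⟨?_, ?_, ?_⟩
      · intro A B
        have h := hu.1 (A.image some) (B.image some)
        rw [← Finset.image_inter _ _ (Option.some_injective α),
          ← Finset.image_union] at h
        exact h
      · simpa using hu.2.1
      · intro i
        have key := pstd_eq_erase u hu none hu0
        have h1 : ((Finset.univ : Finset (Option α)).erase (some i)).erase none
            = (Finset.univ.erase i).image some := by
          ext x; cases x <;> simp
        have h2 : (Finset.univ : Finset (Option α)).erase none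
            = Finset.univ.image some := by
          ext x; cases x <;> simp
        calc u ((Finset.univ.erase i).image some)
            = u (((Finset.univ : Finset (Option α)).erase (some i)).erase none) := by
              rw [h1]
          _ = u ((Finset.univ : Finset (Option α)).erase (some i)) := key _
          _ = u (Finset.univ : Finset (Option α)) := hu.2.2 (some i)
          _ = u ((Finset.univ : Finset (Option α)).erase none) := (key _).symm
          _ = u (Finset.univ.image some) := by rw [h2]
    have htv : PStdSubmodular (fun A : Finset α => v (A.image some)) := by
      refine ⟨?_, ?_, ?_⟩
      · intro A B
        have h := hv.1 (A.image some) (B.image some)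
        rw [← Finset.image_inter _ _ (Option.some_injective α),
          ← Finset.image_union] at h
        exact h
      · simpa using hv.2.1
      · intro i
        have key := pstd_eq_erase v hv none hv0
        have h1 : ((Finset.univ : Finset (Option α)).erase (some i)).erase none
            = (Finset.univ.erase i).image some := by
          ext x; cases x <;> simp
        have h2 : (Finset.univ : Finset (Option α)).erase none
            = Finset.univ.image some := by
          ext x; cases x <;> simp
        calc v ((Finset.univ.erase i).image some)
            = v (((Finset.univ : Finset (Option α)).erase (some i)).erase none) := by
              rw [h1]
          _ = v ((Finset.univ : Finset (Option α)).erase (some i)) := key _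
          _ = v (Finset.univ : Finset (Option α)) := hv.2.2 (some i)
          _ = v ((Finset.univ : Finset (Option α)).erase none) := (key _).symm
          _ = v (Finset.univ.image some) := by rw [h2]
    obtain ⟨⟨c, hc, hcu⟩, ⟨c', hc', hcv⟩⟩ := hext _ _ htu htv hrsum
    have hueq : u = starExt (fun A : Finset α => u (A.image some)) := by
      funext B
      show u B = u (B.eraseNone.image some)
      rw [image_some_eraseNone', pstd_eq_erase u hu none hu0]
    have hveq : v = starExt (fun A : Finset α => v (A.image some)) := by
      funext B
      show v B = v (B.eraseNone.image some)
      rw [image_some_eraseNone', pstd_eq_erase v hv none hv0]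
    refine ⟨⟨c, hc, ?_⟩, ⟨c', hc', ?_⟩⟩
    · rw [hueq, hcu]; funext B; simp [starExt]
    · rw [hveq, hcv]; funext B; simp [starExt]
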